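/- Let T > 0, n ∈ ℕ, and suppose that for every t ∈ [0,T) there are points a₁(t), …, a_n(t) in the flat torus T² = ℝ²/ℤ² such that μ_t = Σ_{i=1}^n δ_{a_i(t)}. Then the map t ↦ μ_t from [0,T) into the space of signed measures equipped with the M¹(T²) norm is Lipschitz continuous if and only if there exist Lipschitz maps b₁, …, b_n: [0,T) → T² such that μ_t = Σ_{i=1}^n δ_{b_i(t)} for every t ∈ [0,T). -/

import Mathlib

noncomputable section

open MeasureTheory

/-- The flat torus `T² = ℝ²/ℤ²`. -/
abbrev T2 : Type := AddCircle (1:ℝ) × AddCircle (1:ℝ)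

/-- The projection `ℝ² → T²`. -/
def proj (x : ℝ × ℝ) : T2 := ((x.1 : AddCircle (1:ℝ)), (x.2 : AddCircle (1:ℝ)))

/-- `φ : T² → ℝ` is of class `C¹`, witnessed by a `C¹` lift `ψ` to `ℝ²`. -/
def IsC1 (φ : T2 → ℝ) (ψ : ℝ × ℝ → ℝ) : Prop :=
  ContDiff ℝ 1 ψ ∧ ∀ x : ℝ × ℝ, φ (proj x) = ψ x

/-- Integration of a (continuous) function against a finite signed measure, via the
Jordan decomposition. -/
def spair (μ : SignedMeasure T2) (φ : T2 → ℝ) : ℝ :=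
  (∫ y, φ y ∂μ.toJordanDecomposition.posPart) -
    ∫ y, φ y ∂μ.toJordanDecomposition.negPart

/-- The `M¹(T²)` norm of a finite signed measure: the dual norm over
`C¹` test functions `φ` with `‖φ‖_∞ + ‖Dφ‖_∞ ≤ 1`. -/
def M1norm (μ : SignedMeasure T2) : ℝ :=
  sSup {r : ℝ | ∃ φ : T2 → ℝ, ∃ ψ : ℝ × ℝ → ℝ, IsC1 φ ψ ∧
    (⨆ x : ℝ × ℝ, |ψ x|) + (⨆ x : ℝ × ℝ, ‖fderiv ℝ ψ x‖) ≤ 1 ∧ r = spair μ φ}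

/-- The Dirac mass at a point of `T²`, as a signed measure. -/
def diracSM (p : T2) : SignedMeasure T2 := (Measure.dirac p).toSignedMeasure

/-! ### Auxiliary: basic facts about `T2` and `proj` -/

instance : MeasurableSingletonClass T2 :=
  ⟨fun p => isClosed_singleton.measurableSet⟩

lemma proj_surjective : Function.Surjective proj := by
  rintro ⟨⟨x⟩, ⟨y⟩⟩
  exact ⟨(x, y), rfl⟩

lemma coe_int_eq_zero (k : ℤ) : ((k : ℝ) : AddCircle (1:ℝ)) = 0 := by
  rw [AddCircle.coe_eq_zero_iff]
  exact ⟨k, by simp⟩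

lemma coe_add_int (u : ℝ) (k : ℤ) : ((u + k : ℝ) : AddCircle (1:ℝ)) = (u : AddCircle (1:ℝ)) := by
  have : ((u + k : ℝ) : AddCircle (1:ℝ)) = (u : AddCircle (1:ℝ)) + ((k : ℝ) : AddCircle (1:ℝ)) := rfl
  rw [this, coe_int_eq_zero, add_zero]

lemma proj_add_int (x : ℝ × ℝ) (k l : ℤ) : proj (x.1 + k, x.2 + l) = proj x := by
  unfold proj
  simp only [coe_add_int]

/-- A representative of a point on the circle realizing the norm. -/
lemma exists_rep (z : AddCircle (1:ℝ)) :
    ∃ u : ℝ, (u : AddCircle (1:ℝ)) = z ∧ |u| = ‖z‖ ∧ |u| ≤ 1/2 := by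
  obtain ⟨x, rfl⟩ : ∃ x : ℝ, (x : AddCircle (1:ℝ)) = z := Quotient.exists_rep z
  refine ⟨x - round x, ?_, ?_, abs_sub_round x⟩
  · have : ((x - round x : ℝ) : AddCircle (1:ℝ))
        = (x : AddCircle (1:ℝ)) - ((round x : ℝ) : AddCircle (1:ℝ)) := rfl
    rw [this, coe_int_eq_zero, sub_zero]
  · rw [AddCircle.norm_eq]; norm_num

/-- Lift two points of the torus to the plane, realizing the distance. -/
lemma exists_lift_pair (p q : T2) :
    ∃ x y : ℝ × ℝ, proj x = p ∧ proj y = q ∧ ‖x - y‖ = dist p q := by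
  obtain ⟨x, hx⟩ := proj_surjective p
  obtain ⟨u1, hu1, hn1, _⟩ := exists_rep (p.1 - q.1)
  obtain ⟨u2, hu2, hn2, _⟩ := exists_rep (p.2 - q.2)
  refine ⟨x, (x.1 - u1, x.2 - u2), hx, ?_, ?_⟩
  · have e1 : ((x.1 - u1 : ℝ) : AddCircle (1:ℝ))
        = (x.1 : AddCircle (1:ℝ)) - (u1 : AddCircle (1:ℝ)) := rfl
    have e2 : ((x.2 - u2 : ℝ) : AddCircle (1:ℝ))
        = (x.2 : AddCircle (1:ℝ)) - (u2 : AddCircle (1:ℝ)) := rfl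
    have hx1 : (x.1 : AddCircle (1:ℝ)) = p.1 := congrArg Prod.fst hx
    have hx2 : (x.2 : AddCircle (1:ℝ)) = p.2 := congrArg Prod.snd hx
    unfold proj
    rw [Prod.ext_iff]
    refine ⟨?_, ?_⟩
    · rw [e1, hx1, hu1]; exact sub_sub_cancel _ _
    · rw [e2, hx2, hu2]; exact sub_sub_cancel _ _
  · have : x - (x.1 - u1, x.2 - u2) = (u1, u2) := by
      ext <;> simp
    rw [this, Prod.norm_def, Prod.dist_eq]
    simp only [Real.norm_eq_abs, hn1, hn2]
    rw [dist_eq_norm, dist_eq_norm]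

/-! ### Periodicity and bounds for admissible test functions -/

lemma bddAbove_of_periodic {f : ℝ × ℝ → ℝ} (hf : Continuous f)
    (hp : ∀ (x : ℝ × ℝ) (k l : ℤ), f (x.1 + k, x.2 + l) = f x) :
    BddAbove (Set.range f) := by
  have hcpt : IsCompact ((Set.Icc (0:ℝ) 1) ×ˢ (Set.Icc (0:ℝ) 1)) :=
    isCompact_Icc.prod isCompact_Icc
  have himg : BddAbove (f '' ((Set.Icc (0:ℝ) 1) ×ˢ (Set.Icc (0:ℝ) 1))) :=
    (hcpt.image hf).bddAbove
  apply himg.mono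
  rintro - ⟨x, rfl⟩
  refine ⟨(Int.fract x.1, Int.fract x.2), ?_, ?_⟩
  · exact ⟨⟨Int.fract_nonneg _, (Int.fract_lt_one _).le⟩,
      ⟨Int.fract_nonneg _, (Int.fract_lt_one _).le⟩⟩
  · have := hp (Int.fract x.1, Int.fract x.2) ⌊x.1⌋ ⌊x.2⌋
    simp only at this
    rw [Int.fract_add_floor, Int.fract_add_floor] at this
    exact this.symm

lemma fderiv_shift (ψ : ℝ × ℝ → ℝ) (hψ : ContDiff ℝ 1 ψ) (w : ℝ × ℝ)
    (hper : ∀ y, ψ (y + w) = ψ y) (x : ℝ × ℝ) :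
    fderiv ℝ ψ (x + w) = fderiv ℝ ψ x := by
  have hd : HasFDerivAt ψ (fderiv ℝ ψ (x + w)) (x + w) :=
    (hψ.differentiable one_ne_zero (x + w)).hasFDerivAt
  have hg : HasFDerivAt (fun y : ℝ × ℝ => y + w)
      (ContinuousLinearMap.id ℝ (ℝ × ℝ)) x := (hasFDerivAt_id x).add_const w
  have hcomp : HasFDerivAt (fun y => ψ (y + w))
      ((fderiv ℝ ψ (x + w)).comp (ContinuousLinearMap.id ℝ (ℝ × ℝ))) x := hd.comp x hg
  have : (fun y => ψ (y + w)) = ψ := funext hper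
  rw [this, ContinuousLinearMap.comp_id] at hcomp
  exact hcomp.fderiv.symm

lemma IsC1.psi_periodic {φ : T2 → ℝ} {ψ : ℝ × ℝ → ℝ} (h : IsC1 φ ψ) :
    ∀ (x : ℝ × ℝ) (k l : ℤ), ψ (x.1 + k, x.2 + l) = ψ x := by
  intro x k l
  rw [← h.2, ← h.2 x, proj_add_int]

lemma IsC1.phi_continuous {φ : T2 → ℝ} {ψ : ℝ × ℝ → ℝ} (h : IsC1 φ ψ) :
    Continuous φ := by
  have hq : IsOpenQuotientMap proj := by
    have := (QuotientAddGroup.isOpenQuotientMap_mk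
        (G := ℝ) (N := AddSubgroup.zmultiples (1:ℝ))).prodMap
      (QuotientAddGroup.isOpenQuotientMap_mk (G := ℝ) (N := AddSubgroup.zmultiples (1:ℝ)))
    exact this
  rw [← hq.continuous_comp_iff]
  have : φ ∘ proj = ψ := funext h.2
  rw [this]
  exact h.1.continuous

lemma IsC1.bddAbove_abs {φ : T2 → ℝ} {ψ : ℝ × ℝ → ℝ} (h : IsC1 φ ψ) :
    BddAbove (Set.range fun x => |ψ x|) :=
  bddAbove_of_periodic (h.1.continuous.abs)
    (fun x k l => by rw [h.psi_periodic x k l])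

lemma IsC1.bddAbove_fderiv {φ : T2 → ℝ} {ψ : ℝ × ℝ → ℝ} (h : IsC1 φ ψ) :
    BddAbove (Set.range fun x => ‖fderiv ℝ ψ x‖) := by
  apply bddAbove_of_periodic
  · exact (h.1.continuous_fderiv one_ne_zero).norm
  · intro x k l
    have : ((x.1 + (k:ℝ), x.2 + (l:ℝ)) : ℝ × ℝ) = x + ((k:ℝ), (l:ℝ)) := by
      ext <;> simp
    rw [this, fderiv_shift ψ h.1 ((k:ℝ), (l:ℝ))
      (fun y => h.psi_periodic y k l) x]

/-- The two key properties of an admissible test function. -/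
lemma adm_bound {φ : T2 → ℝ} {ψ : ℝ × ℝ → ℝ} (h : IsC1 φ ψ)
    (hc : (⨆ x : ℝ × ℝ, |ψ x|) + (⨆ x : ℝ × ℝ, ‖fderiv ℝ ψ x‖) ≤ 1) :
    (∀ y, |φ y| ≤ 1) ∧ (∀ y z : T2, |φ y - φ z| ≤ dist y z) := by
  have h1 : (0:ℝ) ≤ ⨆ x : ℝ × ℝ, |ψ x| := Real.iSup_nonneg fun x => abs_nonneg _
  have h2 : (0:ℝ) ≤ ⨆ x : ℝ × ℝ, ‖fderiv ℝ ψ x‖ := Real.iSup_nonneg fun x => norm_nonneg _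
  constructor
  · intro y
    obtain ⟨x, rfl⟩ := proj_surjective y
    rw [h.2]
    calc |ψ x| ≤ ⨆ x : ℝ × ℝ, |ψ x| := le_ciSup h.bddAbove_abs x
      _ ≤ 1 := by linarith
  · intro y z
    obtain ⟨x, x', hx, hx', hnorm⟩ := exists_lift_pair y z
    rw [← hx, ← hx', h.2, h.2]
    have hC : ∀ w : ℝ × ℝ, ‖fderiv ℝ ψ w‖ ≤ ⨆ x : ℝ × ℝ, ‖fderiv ℝ ψ x‖ :=
      fun w => le_ciSup h.bddAbove_fderiv w
    have := Convex.norm_image_sub_le_of_norm_fderiv_le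
      (f := ψ) (s := Set.univ) (C := ⨆ x : ℝ × ℝ, ‖fderiv ℝ ψ x‖)
      (fun w _ => (h.1.differentiable one_ne_zero).differentiableAt)
      (fun w _ => hC w) convex_univ (Set.mem_univ x') (Set.mem_univ x)
    rw [Real.norm_eq_abs] at this
    calc |ψ x - ψ x'| ≤ (⨆ x : ℝ × ℝ, ‖fderiv ℝ ψ x‖) * ‖x - x'‖ := this
      _ ≤ 1 * ‖x - x'‖ := by
          apply mul_le_mul_of_nonneg_right _ (norm_nonneg _)
          linarith
      _ = dist (proj x) (proj x') := by rw [one_mul, hnorm, ← hx, ← hx']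

/-! ### Computation of `spair` against differences of sums of Dirac masses -/

lemma integrable_cont {φ : T2 → ℝ} (hφ : Continuous φ) (μ : Measure T2) [IsFiniteMeasure μ] :
    Integrable φ μ :=
  hφ.integrable_of_hasCompactSupport (HasCompactSupport.of_compactSpace φ)

lemma spair_toSM_sub (P Q : Measure T2) [IsFiniteMeasure P] [IsFiniteMeasure Q]
    {φ : T2 → ℝ} (hφ : Continuous φ) :
    spair (P.toSignedMeasure - Q.toSignedMeasure) φ = (∫ y, φ y ∂P) - ∫ y, φ y ∂Q := by
  set ν := P.toSignedMeasure - Q.toSignedMeasure with hν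
  have hjd : ν.toJordanDecomposition.posPart.toSignedMeasure
      - ν.toJordanDecomposition.negPart.toSignedMeasure
      = P.toSignedMeasure - Q.toSignedMeasure := by
    rw [← MeasureTheory.JordanDecomposition.toSignedMeasure, 
      SignedMeasure.toSignedMeasure_toJordanDecomposition]
  have key : ν.toJordanDecomposition.posPart + Q = ν.toJordanDecomposition.negPart + P := by
    rw [← Measure.toSignedMeasure_eq_toSignedMeasure_iff,
      Measure.toSignedMeasure_add, Measure.toSignedMeasure_add]
    have := sub_eq_sub_iff_add_eq_add.mp hjd
    linear_combination (norm := abel1) this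
  have hint : ∫ y, φ y ∂(ν.toJordanDecomposition.posPart + Q)
      = ∫ y, φ y ∂(ν.toJordanDecomposition.negPart + P) := by rw [key]
  rw [integral_add_measure (integrable_cont hφ _) (integrable_cont hφ _),
    integral_add_measure (integrable_cont hφ _) (integrable_cont hφ _)] at hint
  unfold spair
  linarith

lemma sum_diracSM (p : Fin n → T2) :
    (∑ i, diracSM (p i)) = (∑ i : Fin n, Measure.dirac (p i)).toSignedMeasure := by
  classical
  have : ∀ s : Finset (Fin n), (∑ i ∈ s, diracSM (p i))
      = (∑ i ∈ s, Measure.dirac (p i)).toSignedMeasure := by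
    intro s
    induction s using Finset.induction_on with
    | empty => simp [diracSM, Measure.toSignedMeasure_zero]
    | insert _ _ hx ih =>
        rw [Finset.sum_insert hx, ih, diracSM, ← Measure.toSignedMeasure_add]
        exact Measure.toSignedMeasure_congr
          (Finset.sum_insert (f := fun i => Measure.dirac (p i)) hx).symm
  exact this Finset.univ

lemma spair_dirac_sums {n : ℕ} (p q : Fin n → T2) {φ : T2 → ℝ} (hφ : Continuous φ) :
    spair ((∑ i, diracSM (p i)) - ∑ i, diracSM (q i)) φ
      = (∑ i, φ (p i)) - ∑ i, φ (q i) := by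
  rw [sum_diracSM p, sum_diracSM q,
    spair_toSM_sub _ _ hφ,
    integral_finset_sum_measure (fun i _ => integrable_cont hφ _),
    integral_finset_sum_measure (fun i _ => integrable_cont hφ _)]
  simp [integral_dirac]

/-! ### Bounds on the `M¹` norm -/

lemma M1_bddAbove (ν : SignedMeasure T2) :
    BddAbove {r : ℝ | ∃ φ : T2 → ℝ, ∃ ψ : ℝ × ℝ → ℝ, IsC1 φ ψ ∧
      (⨆ x : ℝ × ℝ, |ψ x|) + (⨆ x : ℝ × ℝ, ‖fderiv ℝ ψ x‖) ≤ 1 ∧ r = spair ν φ} := by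
  refine ⟨(ν.toJordanDecomposition.posPart Set.univ).toReal
    + (ν.toJordanDecomposition.negPart Set.univ).toReal, ?_⟩
  rintro r ⟨φ, ψ, h1, h2, rfl⟩
  obtain ⟨hb, -⟩ := adm_bound h1 h2
  have e1 : ‖∫ y, φ y ∂ν.toJordanDecomposition.posPart‖
      ≤ 1 * (ν.toJordanDecomposition.posPart Set.univ).toReal :=
    norm_integral_le_of_norm_le_const (Filter.Eventually.of_forall fun y => by
      rw [Real.norm_eq_abs]; exact hb y)
  have e2 : ‖∫ y, φ y ∂ν.toJordanDecomposition.negPart‖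
      ≤ 1 * (ν.toJordanDecomposition.negPart Set.univ).toReal :=
    norm_integral_le_of_norm_le_const (Filter.Eventually.of_forall fun y => by
      rw [Real.norm_eq_abs]; exact hb y)
  rw [Real.norm_eq_abs] at e1 e2
  unfold spair
  rw [one_mul] at e1 e2
  have := abs_le.mp e1
  have := abs_le.mp e2
  cases abs_le.mp e1; cases abs_le.mp e2; linarith

lemma le_M1norm (ν : SignedMeasure T2) {φ : T2 → ℝ} {ψ : ℝ × ℝ → ℝ}
    (h1 : IsC1 φ ψ)
    (h2 : (⨆ x : ℝ × ℝ, |ψ x|) + (⨆ x : ℝ × ℝ, ‖fderiv ℝ ψ x‖) ≤ 1) :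
    spair ν φ ≤ M1norm ν :=
  le_csSup (M1_bddAbove ν) ⟨φ, ψ, h1, h2, rfl⟩

lemma M1norm_le (ν : SignedMeasure T2) {B : ℝ} (hB : 0 ≤ B)
    (h : ∀ (φ : T2 → ℝ) (ψ : ℝ × ℝ → ℝ), IsC1 φ ψ →
      (⨆ x : ℝ × ℝ, |ψ x|) + (⨆ x : ℝ × ℝ, ‖fderiv ℝ ψ x‖) ≤ 1 → spair ν φ ≤ B) :
    M1norm ν ≤ B := by
  apply Real.sSup_le _ hB
  rintro r ⟨φ, ψ, h1, h2, rfl⟩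
  exact h φ ψ h1 h2

/-! ### Bump functions on the torus -/

open Real

/-- The basic `C¹` profile. -/
def gg (y : ℝ) : ℝ := (max (1 - y) 0)^2

lemma gg_zero : gg 0 = 1 := by norm_num [gg]

lemma gg_nonneg (y : ℝ) : 0 ≤ gg y := sq_nonneg _

lemma gg_le_one {y : ℝ} (hy : 0 ≤ y) : gg y ≤ 1 := by
  have h1 : max (1 - y) 0 ≤ 1 := max_le (by linarith) zero_le_one
  have h0 : (0:ℝ) ≤ max (1 - y) 0 := le_max_right _ _
  calc (max (1 - y) 0)^2 ≤ 1^2 := pow_le_pow_left₀ h0 h1 2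
    _ = 1 := one_pow 2

lemma gg_eq_zero {y : ℝ} (hy : 1 ≤ y) : gg y = 0 := by
  have : max (1 - y) 0 = 0 := max_eq_right (by linarith)
  simp [gg, this]

lemma hasDerivAt_gg (y : ℝ) : HasDerivAt gg (-(2 * max (1 - y) 0)) y := by
  rcases lt_trichotomy y 1 with h | h | h
  · have hev : gg =ᶠ[nhds y] fun z => (1 - z)^2 := by
      filter_upwards [eventually_lt_nhds h] with z hz
      unfold gg
      rw [max_eq_left (by linarith)]
    have : HasDerivAt (fun z : ℝ => (1 - z)^2) (-(2 * max (1 - y) 0)) y := by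
      have h1 : HasDerivAt (fun z : ℝ => 1 - z) (-1) y := by
        simpa using (hasDerivAt_id y).const_sub 1
      have := h1.fun_pow 2
      simpa [max_eq_left (by linarith : (0:ℝ) ≤ 1 - y), mul_comm] using this
    exact this.congr_of_eventuallyEq hev
  · subst h
    rw [hasDerivAt_iff_isLittleO]
    rw [Asymptotics.isLittleO_iff]
    intro c hc
    filter_upwards [Metric.ball_mem_nhds (1:ℝ) hc] with z hz
    simp only [Metric.mem_ball, Real.dist_eq] at hz
    have habs : |max (1 - z) 0| ≤ |z - 1| := by
      rcases le_or_gt z 1 with h' | h'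
      · rw [max_eq_left (by linarith), abs_of_nonneg (by linarith), abs_of_nonpos (by linarith)]
        linarith
      · rw [max_eq_right (by linarith)]; simp
    have hgg1 : gg 1 = 0 := by norm_num [gg]
    have hred : ‖gg z - gg 1 - (z - 1) • -(2 * max (1 - (1:ℝ)) 0)‖ = gg z := by
      have : max (1 - (1:ℝ)) 0 = 0 := by norm_num
      rw [this, hgg1]
      simp only [smul_eq_mul, mul_zero, neg_zero, sub_zero]
      rw [Real.norm_eq_abs, abs_of_nonneg (gg_nonneg z)]
    rw [hred]
    calc gg z = |max (1 - z) 0| * |max (1 - z) 0| := by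
          rw [← abs_mul, abs_of_nonneg (mul_self_nonneg _)]; rw [gg, sq]
      _ ≤ |z - 1| * |z - 1| := mul_le_mul habs habs (abs_nonneg _) (abs_nonneg _)
      _ ≤ c * |z - 1| := by
          apply mul_le_mul_of_nonneg_right (le_of_lt hz) (abs_nonneg _)
      _ = c * ‖z - 1‖ := rfl
  · have hev : gg =ᶠ[nhds y] fun _ => (0:ℝ) := by
      filter_upwards [eventually_gt_nhds h] with z hz
      unfold gg
      rw [max_eq_right (by linarith)]
      norm_num
    have : HasDerivAt (fun _ : ℝ => (0:ℝ)) (-(2 * max (1 - y) 0)) y := by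
      rw [max_eq_right (by linarith)]
      simpa using hasDerivAt_const y (0:ℝ)
    exact this.congr_of_eventuallyEq hev

lemma contDiff_gg : ContDiff ℝ 1 gg := by
  rw [contDiff_one_iff_deriv]
  constructor
  · exact fun y => (hasDerivAt_gg y).differentiableAt
  · have : deriv gg = fun y => -(2 * max (1 - y) 0) := funext fun y => (hasDerivAt_gg y).deriv
    rw [this]
    fun_prop

lemma cos_periodic' : Function.Periodic (fun v : ℝ => Real.cos (2*π*v)) 1 := by
  intro v
  have : 2*π*(v+1) = 2*π*v + 2*π := by ring
  simp only [this, Real.cos_add_two_pi]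

/-- Cosine as a function on the circle. -/
def cosC : AddCircle (1:ℝ) → ℝ := cos_periodic'.lift

lemma cosC_coe (v : ℝ) : cosC (v : AddCircle (1:ℝ)) = Real.cos (2*π*v) :=
  cos_periodic'.lift_coe v

lemma cosC_continuous : Continuous cosC := by
  rw [← (QuotientAddGroup.isOpenQuotientMap_mk
    (G := ℝ) (N := AddSubgroup.zmultiples (1:ℝ))).continuous_comp_iff]
  have : cosC ∘ (QuotientAddGroup.mk : ℝ → AddCircle (1:ℝ)) = fun v => Real.cos (2*π*v) :=
    funext fun v => cosC_coe v
  rw [this]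
  fun_prop

lemma cosC_le_one (z : AddCircle (1:ℝ)) : cosC z ≤ 1 := by
  obtain ⟨u, rfl, -, -⟩ := exists_rep z
  rw [cosC_coe]
  exact Real.cos_le_one _

lemma cosC_zero : cosC 0 = 1 := by
  have : (0 : AddCircle (1:ℝ)) = ((0:ℝ) : AddCircle (1:ℝ)) := rfl
  rw [this, cosC_coe]
  norm_num

lemma cosC_le_of_norm_ge {δ : ℝ} (hδ0 : 0 < δ) (hδ : δ ≤ 1/4) (z : AddCircle (1:ℝ))
    (hz : δ ≤ ‖z‖) : cosC z ≤ Real.cos (2*π*δ) := by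
  obtain ⟨u, rfl, hn, hu⟩ := exists_rep z
  rw [cosC_coe]
  have h1 : Real.cos (2*π*u) = Real.cos (2*π*|u|) := by
    rcases abs_cases u with ⟨h, -⟩ | ⟨h, -⟩
    · rw [h]
    · rw [h]; rw [show 2*π*(-u) = -(2*π*u) by ring, Real.cos_neg]
  rw [h1]
  apply Real.cos_le_cos_of_nonneg_of_le_pi
  · positivity
  · nlinarith [Real.pi_pos, hu]
  · have h2 : δ ≤ |u| := by rw [hn]; exact hz
    nlinarith [Real.pi_pos, h2]

lemma rho_facts {δ : ℝ} (hδ0 : 0 < δ) (hδ : δ ≤ 1/4) :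
    1 - Real.cos (2*π*δ) = 2 * Real.sin (π*δ)^2 ∧ 2*δ ≤ Real.sin (π*δ) := by
  constructor
  · have := Real.sin_sq_eq_half_sub (π*δ)
    have h2 : 2*(π*δ) = 2*π*δ := by ring
    rw [h2] at this
    linarith
  · have hx0 : 0 < π*δ := by positivity
    have hx1 : π*δ ≤ 1 := by nlinarith [Real.pi_lt_d2]
    have := Real.sin_gt_sub_cube hx0
    nlinarith [Real.pi_gt_d6, sq_nonneg δ, sq_nonneg (π*δ)]

lemma gW_hasDerivAt {δ : ℝ} (hδ0 : 0 < δ) (hδ : δ ≤ 1/4) (v : ℝ) :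
    HasDerivAt (fun v => gg ((1 - Real.cos (2*π*v))/(1 - Real.cos (2*π*δ))))
      ((-(2 * max (1 - (1 - Real.cos (2*π*v))/(1 - Real.cos (2*π*δ))) 0))
        * (2*π*Real.sin (2*π*v)/(1 - Real.cos (2*π*δ)))) v := by
  have hlin : HasDerivAt (fun v : ℝ => 2*π*v) (2*π) v := by
    simpa using (hasDerivAt_id v).const_mul (2*π)
  have hcos : HasDerivAt (fun v : ℝ => Real.cos (2*π*v)) (-Real.sin (2*π*v) * (2*π)) v :=
    (Real.hasDerivAt_cos (2*π*v)).comp v hlin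
  have hinner : HasDerivAt (fun v : ℝ => (1 - Real.cos (2*π*v))/(1 - Real.cos (2*π*δ)))
      ((2*π*Real.sin (2*π*v))/(1 - Real.cos (2*π*δ))) v := by
    have := ((hasDerivAt_const v (1:ℝ)).sub hcos).div_const (1 - Real.cos (2*π*δ))
    exact this.congr_deriv (by ring)
  have houter := hasDerivAt_gg ((1 - Real.cos (2*π*v))/(1 - Real.cos (2*π*δ)))
  exact houter.comp v hinner

lemma gW_deriv_bound {δ : ℝ} (hδ0 : 0 < δ) (hδ : δ ≤ 1/4) (v : ℝ) :
    |(-(2 * max (1 - (1 - Real.cos (2*π*v))/(1 - Real.cos (2*π*δ))) 0))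
        * (2*π*Real.sin (2*π*v)/(1 - Real.cos (2*π*δ)))| ≤ 2*π/δ := by
  obtain ⟨hrho, hs⟩ := rho_facts hδ0 hδ
  set ρ : ℝ := 1 - Real.cos (2*π*δ) with hρdef
  set s : ℝ := Real.sin (π*δ) with hsdef
  have s_pos : 0 < s := by linarith
  have ρ_pos : 0 < ρ := by nlinarith
  have hw0 : 0 ≤ 1 - Real.cos (2*π*v) := by nlinarith [Real.cos_le_one (2*π*v)]
  by_cases hcase : 1 ≤ (1 - Real.cos (2*π*v))/ρ
  · have : max (1 - (1 - Real.cos (2*π*v))/ρ) 0 = 0 := max_eq_right (by linarith)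
    rw [this]
    simp only [mul_zero, neg_zero, zero_mul, abs_zero]
    positivity
  · push_neg at hcase
    have hWlt : 1 - Real.cos (2*π*v) < ρ := (div_lt_one ρ_pos).mp hcase
    have hsin2 : Real.sin (2*π*v)^2 ≤ 2*(1 - Real.cos (2*π*v)) := by
      nlinarith [Real.sin_sq_add_cos_sq (2*π*v), Real.neg_one_le_cos (2*π*v)]
    have habs_sin : |Real.sin (2*π*v)| ≤ 2*s := by
      nlinarith [abs_nonneg (Real.sin (2*π*v)), sq_abs (Real.sin (2*π*v))]
    set m : ℝ := max (1 - (1 - Real.cos (2*π*v))/ρ) 0 with hmdef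
    have hm0 : 0 ≤ m := le_max_right _ _
    have hm1 : m ≤ 1 := by
      apply max_le _ zero_le_one
      have : 0 ≤ (1 - Real.cos (2*π*v))/ρ := div_nonneg hw0 ρ_pos.le
      linarith
    have habs : |(-(2 * m)) * (2*π*Real.sin (2*π*v)/ρ)|
        = 2 * m * (2*π*|Real.sin (2*π*v)|/ρ) := by
      rw [abs_mul, abs_neg, abs_of_nonneg (by linarith : (0:ℝ) ≤ 2*m)]
      congr 1
      rw [abs_div, abs_of_pos ρ_pos]
      congr 1
      rw [abs_mul, abs_of_nonneg (by positivity : (0:ℝ) ≤ 2*π)]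
    rw [habs]
    calc 2 * m * (2*π*|Real.sin (2*π*v)|/ρ) ≤ 2 * 1 * (2*π*(2*s)/ρ) := by
          gcongr
      _ = 4*π/s := by
          rw [hrho]
          field_simp
          ring
      _ ≤ 2*π/δ := by
          rw [div_le_div_iff₀ s_pos hδ0]
          nlinarith [Real.pi_pos]

lemma gW_lip {δ : ℝ} (hδ0 : 0 < δ) (hδ : δ ≤ 1/4) (a b : ℝ) :
    |gg ((1 - Real.cos (2*π*a))/(1 - Real.cos (2*π*δ)))
      - gg ((1 - Real.cos (2*π*b))/(1 - Real.cos (2*π*δ)))| ≤ (2*π/δ) * |a - b| := by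
  have := Convex.norm_image_sub_le_of_norm_deriv_le
    (f := fun v => gg ((1 - Real.cos (2*π*v))/(1 - Real.cos (2*π*δ))))
    (s := Set.univ) (C := 2*π/δ)
    (fun x _ => (gW_hasDerivAt hδ0 hδ x).differentiableAt)
    (fun x _ => by
      rw [(gW_hasDerivAt hδ0 hδ x).deriv, Real.norm_eq_abs]
      exact gW_deriv_bound hδ0 hδ x)
    convex_univ (Set.mem_univ b) (Set.mem_univ a)
  rw [Real.norm_eq_abs, Real.norm_eq_abs] at this
  exact this

/-! ### The torus bump profile -/

def Gam (δ : ℝ) (z : AddCircle (1:ℝ)) : ℝ := gg ((1 - cosC z)/(1 - Real.cos (2*π*δ)))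

lemma Gam_coe (δ v : ℝ) : Gam δ (v : AddCircle (1:ℝ))
    = gg ((1 - Real.cos (2*π*v))/(1 - Real.cos (2*π*δ))) := by rw [Gam, cosC_coe]

lemma Gam_self (δ : ℝ) : Gam δ 0 = 1 := by
  rw [Gam, cosC_zero, sub_self, zero_div, gg_zero]

lemma Gam_nonneg (δ : ℝ) (z : AddCircle (1:ℝ)) : 0 ≤ Gam δ z := gg_nonneg _

lemma Gam_le_one {δ : ℝ} (hδ0 : 0 < δ) (hδ : δ ≤ 1/4) (z : AddCircle (1:ℝ)) :
    Gam δ z ≤ 1 := by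
  obtain ⟨hrho, hs⟩ := rho_facts hδ0 hδ
  have ρ_pos : 0 < 1 - Real.cos (2*π*δ) := by nlinarith
  exact gg_le_one (div_nonneg (by linarith [cosC_le_one z]) ρ_pos.le)

lemma Gam_eq_zero {δ : ℝ} (hδ0 : 0 < δ) (hδ : δ ≤ 1/4) (z : AddCircle (1:ℝ))
    (hz : δ < ‖z‖) : Gam δ z = 0 := by
  obtain ⟨hrho, hs⟩ := rho_facts hδ0 hδ
  have ρ_pos : 0 < 1 - Real.cos (2*π*δ) := by nlinarith
  apply gg_eq_zero
  rw [le_div_iff₀ ρ_pos, one_mul]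
  have := cosC_le_of_norm_ge hδ0 hδ z hz.le
  linarith

/-- `C¹` smoothness of finite products. -/
lemma contDiff_finset_prod {ι : Type*} (s : Finset ι) (F : ι → (ℝ × ℝ) → ℝ)
    (hF : ∀ i ∈ s, ContDiff ℝ 1 (F i)) :
    ContDiff ℝ 1 (fun x => ∏ i ∈ s, F i x) := by
  classical
  induction s using Finset.induction_on with
  | empty => simpa using contDiff_const
  | insert _ _ hx ih =>
      rename_i a s'
      simp only [Finset.prod_insert hx]
      exact (hF a (Finset.mem_insert_self a s')).mul
        (ih fun i hi => hF i (Finset.mem_insert_of_mem hi))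

lemma mul01_lip {a b a' b' : ℝ} (ha : a ∈ Set.Icc (0:ℝ) 1) (hb : b ∈ Set.Icc (0:ℝ) 1)
    (ha' : a' ∈ Set.Icc (0:ℝ) 1) (hb' : b' ∈ Set.Icc (0:ℝ) 1) :
    |a*b - a'*b'| ≤ |a - a'| + |b - b'| := by
  have : a*b - a'*b' = a*(b - b') + b'*(a - a') := by ring
  rw [this]
  calc |a*(b - b') + b'*(a - a')| ≤ |a*(b - b')| + |b'*(a - a')| := abs_add_le _ _
    _ = |a| * |b - b'| + |b'| * |a - a'| := by rw [abs_mul, abs_mul]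
    _ ≤ 1 * |b - b'| + 1 * |a - a'| := by
        gcongr
        · rw [abs_of_nonneg ha.1]; exact ha.2
        · rw [abs_of_nonneg hb'.1]; exact hb'.2
    _ = |a - a'| + |b - b'| := by ring

lemma finset_prod_lip {ι : Type*} (s : Finset ι) (F : ι → (ℝ × ℝ) → ℝ) (C : ℝ) (hC : 0 ≤ C)
    (h0 : ∀ i ∈ s, ∀ x, 0 ≤ F i x) (h1 : ∀ i ∈ s, ∀ x, F i x ≤ 1)
    (hlip : ∀ i ∈ s, ∀ x y, |F i x - F i y| ≤ C * ‖x - y‖) :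
    ∀ x y, |(∏ i ∈ s, F i x) - ∏ i ∈ s, F i y| ≤ (s.card * C) * ‖x - y‖ := by
  classical
  induction s using Finset.induction_on with
  | empty => intro x y; simp
  | insert _ _ hx ih =>
      rename_i a s'
      intro x y
      have hprod0 : ∀ z, 0 ≤ ∏ i ∈ s', F i z := fun z =>
        Finset.prod_nonneg fun i hi => h0 i (Finset.mem_insert_of_mem hi) z
      have hprod1 : ∀ z, ∏ i ∈ s', F i z ≤ 1 := fun z =>
        Finset.prod_le_one (fun i hi => h0 i (Finset.mem_insert_of_mem hi) z)
          (fun i hi => h1 i (Finset.mem_insert_of_mem hi) z)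
      simp only [Finset.prod_insert hx]
      have key := mul01_lip
        (Set.mem_Icc.mpr ⟨h0 a (Finset.mem_insert_self a s') x, h1 a (Finset.mem_insert_self a s') x⟩)
        (Set.mem_Icc.mpr ⟨hprod0 x, hprod1 x⟩)
        (Set.mem_Icc.mpr ⟨h0 a (Finset.mem_insert_self a s') y, h1 a (Finset.mem_insert_self a s') y⟩)
        (Set.mem_Icc.mpr ⟨hprod0 y, hprod1 y⟩)
      have h2 := ih (fun i hi => h0 i (Finset.mem_insert_of_mem hi))
        (fun i hi => h1 i (Finset.mem_insert_of_mem hi))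
        (fun i hi => hlip i (Finset.mem_insert_of_mem hi)) x y
      have h3 := hlip a (Finset.mem_insert_self a s') x y
      have hcard : ((insert a s').card : ℝ) = s'.card + 1 := by
        rw [Finset.card_insert_of_notMem hx]
        push_cast
        ring
      calc |F a x * ∏ i ∈ s', F i x - F a y * ∏ i ∈ s', F i y|
          ≤ |F a x - F a y| + |(∏ i ∈ s', F i x) - ∏ i ∈ s', F i y| := key
        _ ≤ C * ‖x - y‖ + (s'.card * C) * ‖x - y‖ := add_le_add h3 h2
        _ = ((insert a s').card * C) * ‖x - y‖ := by rw [hcard]; ring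

/-- Construction of the admissible test function used for the matching lemma. -/
lemma exists_test (n : ℕ) {δ : ℝ} (hδ0 : 0 < δ) (hδ : δ ≤ 1/4) (p : Fin n → T2)
    (s : Finset (Fin n)) :
    ∃ (φ : T2 → ℝ) (ψ : ℝ × ℝ → ℝ), IsC1 φ ψ ∧
      (⨆ x : ℝ × ℝ, |ψ x|) + (⨆ x : ℝ × ℝ, ‖fderiv ℝ ψ x‖) ≤ 1 ∧
      Continuous φ ∧
      (∀ y, 0 ≤ φ y) ∧ (∀ y, φ y ≤ (1 + 4*π*n/δ)⁻¹) ∧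
      (∀ i ∈ s, φ (p i) = (1 + 4*π*n/δ)⁻¹) ∧
      (∀ y : T2, (∀ i ∈ s, δ < dist y (p i)) → φ y = 0) := by
  classical
  set h : ℝ := (1 + 4*π*n/δ)⁻¹ with hh
  have hquot : (0:ℝ) < 1 + 4*π*n/δ := by positivity
  have h_pos : 0 < h := inv_pos.mpr hquot
  set φ : T2 → ℝ := fun y =>
    h * (1 - ∏ i ∈ s, (1 - Gam δ (y.1 - (p i).1) * Gam δ (y.2 - (p i).2))) with hφdef
  set ψ : ℝ × ℝ → ℝ := fun x => φ (proj x) with hψdef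
  -- lifts of the centers
  have hc : ∀ i : Fin n, ∃ c : ℝ × ℝ, proj c = p i := fun i => proj_surjective (p i)
  choose c hcp using hc
  -- explicit formula for ψ
  have hψeq : ψ = fun x : ℝ × ℝ =>
      h * (1 - ∏ i ∈ s, (1 - gg ((1 - Real.cos (2*π*(x.1 - (c i).1)))/(1 - Real.cos (2*π*δ)))
        * gg ((1 - Real.cos (2*π*(x.2 - (c i).2)))/(1 - Real.cos (2*π*δ))))) := by
    funext x
    simp only [hψdef, hφdef]
    congr 1
    congr 1
    apply Finset.prod_congr rfl
    intro i _
    have e1 : (proj x).1 - (p i).1 = ((x.1 - (c i).1 : ℝ) : AddCircle (1:ℝ)) := by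
      rw [← hcp i]
      rfl
    have e2 : (proj x).2 - (p i).2 = ((x.2 - (c i).2 : ℝ) : AddCircle (1:ℝ)) := by
      rw [← hcp i]
      rfl
    rw [e1, e2, Gam_coe, Gam_coe]
  -- basic value facts
  have hfac01 : ∀ (y : T2) (i : Fin n), i ∈ s →
      (1 - Gam δ (y.1 - (p i).1) * Gam δ (y.2 - (p i).2)) ∈ Set.Icc (0:ℝ) 1 := by
    intro y i _
    constructor
    · have := mul_le_one₀ (Gam_le_one hδ0 hδ (y.1 - (p i).1)) (Gam_nonneg δ _)
        (Gam_le_one hδ0 hδ (y.2 - (p i).2))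
      linarith
    · have := mul_nonneg (Gam_nonneg δ (y.1 - (p i).1)) (Gam_nonneg δ (y.2 - (p i).2))
      linarith
  have hprod01 : ∀ y : T2,
      (∏ i ∈ s, (1 - Gam δ (y.1 - (p i).1) * Gam δ (y.2 - (p i).2))) ∈ Set.Icc (0:ℝ) 1 := by
    intro y
    constructor
    · exact Finset.prod_nonneg fun i hi => (hfac01 y i hi).1
    · exact Finset.prod_le_one (fun i hi => (hfac01 y i hi).1) (fun i hi => (hfac01 y i hi).2)
  have hφ0 : ∀ y, 0 ≤ φ y := by
    intro y
    have := (hprod01 y).2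
    simp only [hφdef]
    have : 0 ≤ 1 - ∏ i ∈ s, (1 - Gam δ (y.1 - (p i).1) * Gam δ (y.2 - (p i).2)) := by linarith
    exact mul_nonneg h_pos.le this
  have hφh : ∀ y, φ y ≤ h := by
    intro y
    have := (hprod01 y).1
    simp only [hφdef]
    nlinarith
  -- C¹ smoothness
  have hcd : ContDiff ℝ 1 ψ := by
    rw [hψeq]
    apply ContDiff.mul contDiff_const
    apply ContDiff.sub contDiff_const
    apply contDiff_finset_prod
    intro i _
    apply ContDiff.sub contDiff_const
    have hin1 : ContDiff ℝ 1 (fun x : ℝ × ℝ =>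
        (1 - Real.cos (2*π*(x.1 - (c i).1)))/(1 - Real.cos (2*π*δ))) := by
      apply ContDiff.div_const
      apply ContDiff.sub contDiff_const
      exact Real.contDiff_cos.comp
        (ContDiff.mul contDiff_const (contDiff_fst.sub contDiff_const))
    have hin2 : ContDiff ℝ 1 (fun x : ℝ × ℝ =>
        (1 - Real.cos (2*π*(x.2 - (c i).2)))/(1 - Real.cos (2*π*δ))) := by
      apply ContDiff.div_const
      apply ContDiff.sub contDiff_const
      exact Real.contDiff_cos.comp
        (ContDiff.mul contDiff_const (contDiff_snd.sub contDiff_const))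
    exact (contDiff_gg.comp hin1).mul (contDiff_gg.comp hin2)
  have hC1 : IsC1 φ ψ := ⟨hcd, fun x => rfl⟩
  -- Lipschitz estimate for ψ
  have hψlip : ∀ x y : ℝ × ℝ, |ψ x - ψ y| ≤ (h * (n * (4*π/δ))) * ‖x - y‖ := by
    intro x y
    rw [hψeq]
    simp only
    set F : Fin n → (ℝ × ℝ) → ℝ := fun i x =>
      1 - gg ((1 - Real.cos (2*π*(x.1 - (c i).1)))/(1 - Real.cos (2*π*δ)))
        * gg ((1 - Real.cos (2*π*(x.2 - (c i).2)))/(1 - Real.cos (2*π*δ))) with hF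
    have hFlip : ∀ i ∈ s, ∀ x y : ℝ × ℝ, |F i x - F i y| ≤ (4*π/δ) * ‖x - y‖ := by
      intro i _ x y
      simp only [hF]
      have e : ∀ u v : ℝ, (1 - u) - (1 - v) = -(u - v) := by intro u v; ring
      rw [e, abs_neg]
      have hg1x := gg_le_one (y := (1 - Real.cos (2*π*(x.1 - (c i).1)))/(1 - Real.cos (2*π*δ)))
      -- bound via mul01_lip and gW_lip
      have hρ : 0 < 1 - Real.cos (2*π*δ) := by
        obtain ⟨hrho, hs2⟩ := rho_facts hδ0 hδ
        nlinarith
      have harg : ∀ w : ℝ, 0 ≤ (1 - Real.cos (2*π*w))/(1 - Real.cos (2*π*δ)) := by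
        intro w
        apply div_nonneg _ hρ.le
        nlinarith [Real.cos_le_one (2*π*w)]
      have hmem : ∀ w : ℝ, gg ((1 - Real.cos (2*π*w))/(1 - Real.cos (2*π*δ))) ∈ Set.Icc (0:ℝ) 1 :=
        fun w => ⟨gg_nonneg _, gg_le_one (harg w)⟩
      have key := mul01_lip (hmem (x.1 - (c i).1)) (hmem (x.2 - (c i).2))
        (hmem (y.1 - (c i).1)) (hmem (y.2 - (c i).2))
      have l1 := gW_lip hδ0 hδ (x.1 - (c i).1) (y.1 - (c i).1)
      have l2 := gW_lip hδ0 hδ (x.2 - (c i).2) (y.2 - (c i).2)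
      have e1 : x.1 - (c i).1 - (y.1 - (c i).1) = (x - y).1 := by simp
      have e2 : x.2 - (c i).2 - (y.2 - (c i).2) = (x - y).2 := by simp
      rw [e1] at l1
      rw [e2] at l2
      have hfst : |(x - y).1| ≤ ‖x - y‖ := by
        rw [← Real.norm_eq_abs]
        exact norm_fst_le (x - y)
      have hsnd : |(x - y).2| ≤ ‖x - y‖ := by
        rw [← Real.norm_eq_abs]
        exact norm_snd_le (x - y)
      have hπδ : 0 ≤ 2*π/δ := by positivity
      calc |gg ((1 - Real.cos (2*π*(x.1 - (c i).1)))/(1 - Real.cos (2*π*δ)))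
            * gg ((1 - Real.cos (2*π*(x.2 - (c i).2)))/(1 - Real.cos (2*π*δ)))
          - gg ((1 - Real.cos (2*π*(y.1 - (c i).1)))/(1 - Real.cos (2*π*δ)))
            * gg ((1 - Real.cos (2*π*(y.2 - (c i).2)))/(1 - Real.cos (2*π*δ)))|
          ≤ |gg ((1 - Real.cos (2*π*(x.1 - (c i).1)))/(1 - Real.cos (2*π*δ)))
              - gg ((1 - Real.cos (2*π*(y.1 - (c i).1)))/(1 - Real.cos (2*π*δ)))|
            + |gg ((1 - Real.cos (2*π*(x.2 - (c i).2)))/(1 - Real.cos (2*π*δ)))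
              - gg ((1 - Real.cos (2*π*(y.2 - (c i).2)))/(1 - Real.cos (2*π*δ)))| := key
        _ ≤ (2*π/δ) * |(x - y).1| + (2*π/δ) * |(x - y).2| := add_le_add l1 l2
        _ ≤ (2*π/δ) * ‖x - y‖ + (2*π/δ) * ‖x - y‖ := by
            exact add_le_add (mul_le_mul_of_nonneg_left hfst hπδ)
              (mul_le_mul_of_nonneg_left hsnd hπδ)
        _ = (4*π/δ) * ‖x - y‖ := by ring
    have hF0 : ∀ i ∈ s, ∀ x, 0 ≤ F i x := by
      intro i hi x
      have hρ : 0 < 1 - Real.cos (2*π*δ) := by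
        obtain ⟨hrho, hs2⟩ := rho_facts hδ0 hδ
        nlinarith
      have harg : ∀ w : ℝ, 0 ≤ (1 - Real.cos (2*π*w))/(1 - Real.cos (2*π*δ)) := by
        intro w
        apply div_nonneg _ hρ.le
        nlinarith [Real.cos_le_one (2*π*w)]
      have := mul_le_one₀ (gg_le_one (harg (x.1 - (c i).1))) (gg_nonneg _)
        (gg_le_one (harg (x.2 - (c i).2)))
      simp only [hF]
      linarith
    have hF1 : ∀ i ∈ s, ∀ x, F i x ≤ 1 := by
      intro i hi x
      have := mul_nonneg (gg_nonneg ((1 - Real.cos (2*π*(x.1 - (c i).1)))/(1 - Real.cos (2*π*δ))))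
        (gg_nonneg ((1 - Real.cos (2*π*(x.2 - (c i).2)))/(1 - Real.cos (2*π*δ))))
      simp only [hF]
      linarith
    have hplip := finset_prod_lip s F (4*π/δ) (by positivity) hF0 hF1 hFlip x y
    have e : h * (1 - ∏ i ∈ s, F i x) - h * (1 - ∏ i ∈ s, F i y)
        = -(h * ((∏ i ∈ s, F i x) - ∏ i ∈ s, F i y)) := by ring
    rw [e, abs_neg, abs_mul, abs_of_nonneg h_pos.le]
    calc h * |(∏ i ∈ s, F i x) - ∏ i ∈ s, F i y|
        ≤ h * ((s.card * (4*π/δ)) * ‖x - y‖) := by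
          exact mul_le_mul_of_nonneg_left hplip h_pos.le
      _ ≤ (h * (n * (4*π/δ))) * ‖x - y‖ := by
          have hcard : (s.card : ℝ) ≤ n := by
            have := Finset.card_le_univ s
            simp only [Finset.card_univ, Fintype.card_fin] at this
            exact_mod_cast this
          have hb : (0:ℝ) ≤ 4*π/δ := by positivity
          have h1 : (s.card:ℝ) * (4*π/δ) ≤ n * (4*π/δ) := mul_le_mul_of_nonneg_right hcard hb
          have h2 := mul_le_mul_of_nonneg_right
            (mul_le_mul_of_nonneg_left h1 h_pos.le) (norm_nonneg (x - y))
          linarith [h2,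
            (by ring : h * (((s.card:ℝ) * (4*π/δ)) * ‖x - y‖)
              = h * ((s.card:ℝ) * (4*π/δ)) * ‖x - y‖),
            (by ring : (h * ((n:ℝ) * (4*π/δ))) * ‖x - y‖
              = h * ((n:ℝ) * (4*π/δ)) * ‖x - y‖)]
  -- the constraint
  have hconstraint : (⨆ x : ℝ × ℝ, |ψ x|) + (⨆ x : ℝ × ℝ, ‖fderiv ℝ ψ x‖) ≤ 1 := by
    have hs1 : (⨆ x : ℝ × ℝ, |ψ x|) ≤ h := by
      apply ciSup_le
      intro x
      rw [abs_of_nonneg (hφ0 (proj x))]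
      exact hφh (proj x)
    have hs2 : (⨆ x : ℝ × ℝ, ‖fderiv ℝ ψ x‖) ≤ h * (n * (4*π/δ)) := by
      apply ciSup_le
      intro x
      apply norm_fderiv_le_of_lip' ℝ (by positivity)
      apply Filter.Eventually.of_forall
      intro x'
      rw [Real.norm_eq_abs]
      exact hψlip x' x
    have : h + h * (n * (4*π/δ)) = 1 := by
      rw [hh]
      field_simp
    linarith
  refine ⟨φ, ψ, hC1, hconstraint, hC1.phi_continuous, hφ0, hφh, ?_, ?_⟩
  · intro i hi
    simp only [hφdef]
    have hzero : ∏ j ∈ s, (1 - Gam δ ((p i).1 - (p j).1) * Gam δ ((p i).2 - (p j).2)) = 0 := by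
      apply Finset.prod_eq_zero hi
      simp [sub_self, Gam_self]
    rw [hzero]
    ring
  · intro y hy
    simp only [hφdef]
    have hone : ∏ i ∈ s, (1 - Gam δ (y.1 - (p i).1) * Gam δ (y.2 - (p i).2)) = 1 := by
      rw [Finset.prod_congr rfl (g := fun _ => (1:ℝ)) ?_, Finset.prod_const_one]
      intro i hi
      have hfar := hy i hi
      rw [Prod.dist_eq] at hfar
      rcases lt_max_iff.mp hfar with hca | hca
      · rw [dist_eq_norm] at hca
        rw [Gam_eq_zero hδ0 hδ _ hca, zero_mul, sub_zero]
      · rw [dist_eq_norm] at hca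
        rw [Gam_eq_zero hδ0 hδ _ hca, mul_zero, sub_zero]
    rw [hone]
    ring

/-! ### The matching lemma -/

/-- The matching constant. -/
def Cm (n : ℕ) : ℝ := 1 + 4*π*n

lemma Cm_pos (n : ℕ) : 0 < Cm n := by
  unfold Cm
  positivity

lemma matching_lemma {n : ℕ} {δ : ℝ} (hδ0 : 0 < δ) (hδ : δ ≤ 1/4) (p q : Fin n → T2)
    (hflat : M1norm ((∑ i, diracSM (p i)) - ∑ i, diracSM (q i)) < δ / Cm n) :
    ∃ σ : Equiv.Perm (Fin n), ∀ i, dist (p i) (q (σ i)) ≤ δ := by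
  classical
  set h : ℝ := (1 + 4*π*n/δ)⁻¹ with hh
  have hquot : (0:ℝ) < 1 + 4*π*n/δ := by positivity
  have h_pos : 0 < h := inv_pos.mpr hquot
  have hδC : δ / Cm n ≤ h := by
    have he : h = δ/(δ + 4*π*n) := by
      rw [hh, inv_eq_one_div, div_eq_div_iff hquot.ne' (by positivity : (0:ℝ) < δ + 4*π*n).ne']
      field_simp
    rw [he, Cm]
    have h1 : (0:ℝ) < δ + 4*π*n := by positivity
    have h2 : δ + 4*π*n ≤ 1 + 4*π*n := by linarith
    gcongr
  -- Hall's condition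
  set t : Fin n → Finset (Fin n) :=
    fun i => Finset.univ.filter (fun j => dist (p i) (q j) ≤ δ) with ht
  have hall : ∀ s : Finset (Fin n), s.card ≤ (s.biUnion t).card := by
    intro s
    obtain ⟨φ, ψ, hC1, hcon, hφcont, hφ0, hφh, hφval, hφzero⟩ := exists_test n hδ0 hδ p s
    have hle : spair ((∑ i, diracSM (p i)) - ∑ i, diracSM (q i)) φ
        ≤ M1norm ((∑ i, diracSM (p i)) - ∑ i, diracSM (q i)) := le_M1norm _ hC1 hcon
    rw [spair_dirac_sums p q hφcont] at hle
    have hsum_p : (h : ℝ) * s.card ≤ ∑ i, φ (p i) := by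
      calc (h : ℝ) * s.card = ∑ i ∈ s, h := by
            rw [Finset.sum_const, nsmul_eq_mul]
            ring
        _ = ∑ i ∈ s, φ (p i) := Finset.sum_congr rfl fun i hi => (hφval i hi).symm
        _ ≤ ∑ i, φ (p i) :=
            Finset.sum_le_sum_of_subset_of_nonneg (Finset.subset_univ s)
              fun i _ _ => hφ0 (p i)
    have hsum_q : ∑ j, φ (q j) ≤ (h : ℝ) * (s.biUnion t).card := by
      calc ∑ j, φ (q j) = ∑ j ∈ s.biUnion t, φ (q j) + ∑ j ∈ (s.biUnion t)ᶜ, φ (q j) := by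
            rw [Finset.sum_add_sum_compl]
        _ ≤ (h : ℝ) * (s.biUnion t).card + 0 := by
            apply add_le_add
            · calc ∑ j ∈ s.biUnion t, φ (q j) ≤ ∑ j ∈ s.biUnion t, h :=
                    Finset.sum_le_sum fun j _ => hφh (q j)
                _ = (h : ℝ) * (s.biUnion t).card := by
                    rw [Finset.sum_const, nsmul_eq_mul]; ring
            · apply le_of_eq
              apply Finset.sum_eq_zero
              intro j hj
              apply hφzero
              intro i hi
              by_contra hcon'
              push_neg at hcon'
              have : j ∈ s.biUnion t := Finset.mem_biUnion.mpr
                ⟨i, hi, Finset.mem_filter.mpr ⟨Finset.mem_univ j, by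
                  rw [dist_comm] at hcon'; exact hcon'⟩⟩
              exact (Finset.mem_compl.mp hj) this
        _ = (h : ℝ) * (s.biUnion t).card := by ring
    have hlt : (h : ℝ) * s.card - h * (s.biUnion t).card < h := by
      calc (h : ℝ) * s.card - h * (s.biUnion t).card
          ≤ (∑ i, φ (p i)) - ∑ j, φ (q j) := by linarith
        _ ≤ M1norm ((∑ i, diracSM (p i)) - ∑ i, diracSM (q i)) := hle
        _ < δ / Cm n := hflat
        _ ≤ h := hδC
    have : (s.card : ℝ) < (s.biUnion t).card + 1 := by
      have := (mul_lt_mul_iff_right₀ h_pos).mp (by linarith : h * ((s.card : ℝ))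
        < h * ((s.biUnion t).card + 1))
      exact_mod_cast this
    have : (s.card : ℝ) ≤ (s.biUnion t).card := by
      have hnat : s.card < (s.biUnion t).card + 1 := by exact_mod_cast this
      exact_mod_cast Nat.lt_succ_iff.mp hnat
    exact_mod_cast this
  obtain ⟨f, hinj, hf⟩ := (Finset.all_card_le_biUnion_card_iff_exists_injective t).mp hall
  have hbij : Function.Bijective f := (Finite.injective_iff_bijective).mp hinj
  refine ⟨Equiv.ofBijective f hbij, fun i => ?_⟩
  have := hf i
  rw [ht] at this
  simp only [Finset.mem_filter] at this
  exact this.2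

/-! ### The forward direction: Lipschitz selection -/

lemma forward_selection (T : ℝ) (hT : 0 < T) (n : ℕ)
    (μ : ℝ → SignedMeasure T2) (a : ℝ → Fin n → T2)
    (hμ : ∀ t ∈ Set.Ico (0:ℝ) T, μ t = ∑ i, diracSM (a t i))
    (K : ℝ) (hK : 0 ≤ K)
    (hlip : ∀ s ∈ Set.Ico (0:ℝ) T, ∀ t ∈ Set.Ico (0:ℝ) T,
      M1norm (μ s - μ t) ≤ K * |s - t|) :
    ∃ b : Fin n → ℝ → T2,
      (∃ K' : ℝ, 0 ≤ K' ∧ ∀ i, ∀ s ∈ Set.Ico (0:ℝ) T, ∀ t ∈ Set.Ico (0:ℝ) T,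
        dist (b i s) (b i t) ≤ K' * |s - t|) ∧
      ∀ t ∈ Set.Ico (0:ℝ) T, μ t = ∑ i, diracSM (b i t) := by
  classical
  set K' : ℝ := Cm n * K + 1 with hK'def
  have hCm := Cm_pos n
  have hK' : 0 < K' := by positivity
  -- choice of the base scale
  obtain ⟨k₀, hk₀⟩ : ∃ k₀ : ℕ, ((1:ℝ)/2)^k₀ < (1/4)/K' :=
    exists_pow_lt_of_lt_one (by positivity) (by norm_num)
  set τ : ℕ → ℝ := fun k => ((1:ℝ)/2)^(k₀+k) with hτdef
  have hτpos : ∀ k, 0 < τ k := fun k => by positivity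
  have hτle : ∀ k, τ k ≤ ((1:ℝ)/2)^k₀ := by
    intro k
    apply pow_le_pow_of_le_one (by norm_num) (by norm_num)
    omega
  have hδ14 : ∀ k, K' * τ k ≤ 1/4 := by
    intro k
    have := hτle k
    have h2 : K' * τ k ≤ K' * ((1/2:ℝ))^k₀ := mul_le_mul_of_nonneg_left this hK'.le
    have h3 : K' * ((1/2:ℝ))^k₀ < K' * ((1/4)/K') := mul_lt_mul_of_pos_left hk₀ hK'
    have h4 : K' * ((1/4)/K') = 1/4 := by field_simp <;> ring
    linarith
  -- the matching step
  have hM : ∀ (k : ℕ) (u v : ℝ), u ∈ Set.Ico (0:ℝ) T → v ∈ Set.Ico (0:ℝ) T →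
      |u - v| ≤ τ k → ∃ σ : Equiv.Perm (Fin n), ∀ i, dist (a u i) (a v (σ i)) ≤ K' * τ k := by
    intro k u v hu hv huv
    apply matching_lemma (mul_pos hK' (hτpos k)) (hδ14 k)
    rw [← hμ u hu, ← hμ v hv]
    calc M1norm (μ u - μ v) ≤ K * |u - v| := hlip u hu v hv
      _ ≤ K * τ k := mul_le_mul_of_nonneg_left huv hK
      _ < (K' * τ k) / Cm n := by
          rw [hK'def, lt_div_iff₀ hCm]
          have := hτpos k
          have := hCm
          nlinarith
  -- grid index
  set J : ℕ → ℝ → ℕ := fun k t => (⌊t / τ k⌋).toNat with hJdef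
  have hJfact : ∀ (k : ℕ) (t : ℝ), 0 ≤ t →
      ((J k t : ℝ)) * τ k ≤ t ∧ t < ((J k t : ℝ) + 1) * τ k := by
    intro k t ht
    have h0 : (0:ℤ) ≤ ⌊t / τ k⌋ := Int.floor_nonneg.mpr (div_nonneg ht (hτpos k).le)
    have hcast : ((J k t : ℝ)) = (⌊t / τ k⌋ : ℝ) := by
      show ((⌊t / τ k⌋.toNat : ℕ) : ℝ) = ((⌊t / τ k⌋ : ℤ) : ℝ)
      exact_mod_cast congrArg (fun z : ℤ => (z : ℝ)) (Int.toNat_of_nonneg h0)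
    constructor
    · rw [hcast]
      calc (⌊t / τ k⌋ : ℝ) * τ k ≤ (t / τ k) * τ k :=
            mul_le_mul_of_nonneg_right (Int.floor_le _) (hτpos k).le
        _ = t := div_mul_cancel₀ t (hτpos k).ne'
    · rw [hcast]
      have := Int.lt_floor_add_one (t / τ k)
      calc t = (t / τ k) * τ k := (div_mul_cancel₀ t (hτpos k).ne').symm
        _ < ((⌊t / τ k⌋ : ℝ) + 1) * τ k :=
            mul_lt_mul_of_pos_right this (hτpos k)
  -- permutation steps along the grid
  have hstepex : ∀ (k j : ℕ), ∃ σ : Equiv.Perm (Fin n),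
      ((j:ℝ)+1) * τ k < T → ∀ i,
        dist (a ((j:ℝ) * τ k) i) (a (((j:ℝ)+1) * τ k) (σ i)) ≤ K' * τ k := by
    intro k j
    by_cases h : ((j:ℝ)+1) * τ k < T
    · have hm1 : (j:ℝ) * τ k ∈ Set.Ico (0:ℝ) T := by
        constructor
        · positivity
        · have : (j:ℝ) * τ k < ((j:ℝ)+1) * τ k := by
            have := hτpos k
            nlinarith
          linarith
      have hm2 : ((j:ℝ)+1) * τ k ∈ Set.Ico (0:ℝ) T := by
        constructor
        · positivity
        · exact h
      have hd : |(j:ℝ) * τ k - (((j:ℝ)+1) * τ k)| ≤ τ k := by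
        rw [show (j:ℝ) * τ k - (((j:ℝ)+1) * τ k) = -(τ k) by ring, abs_neg,
          abs_of_pos (hτpos k)]
      obtain ⟨σ, hσ⟩ := hM k ((j:ℝ) * τ k) (((j:ℝ)+1) * τ k) hm1 hm2 hd
      exact ⟨σ, fun _ => hσ⟩
    · exact ⟨1, fun h' => absurd h' h⟩
  choose step hstep using hstepex
  -- the inductively re-labelled paths
  set prm : ℕ → ℕ → Equiv.Perm (Fin n) := fun k =>
    Nat.rec (Equiv.refl (Fin n)) (fun j ih => ih.trans (step k j)) with hprmdef
  set c : ℕ → ℕ → Fin n → T2 := fun k j i => a ((j:ℝ) * τ k) (prm k j i) with hcdef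
  have hc_step : ∀ (k j : ℕ), ((j:ℝ)+1) * τ k < T →
      ∀ i, dist (c k j i) (c k (j+1) i) ≤ K' * τ k := by
    intro k j h i
    have hprmsucc : prm k (j+1) i = step k j (prm k j i) := rfl
    have : c k (j+1) i = a (((j:ℝ)+1) * τ k) (step k j (prm k j i)) := by
      rw [hcdef]
      simp only
      rw [hprmsucc]
      norm_num
    rw [this, hcdef]
    exact hstep k j h (prm k j i)
  have hchain : ∀ (k : ℕ) (j l : ℕ), j ≤ l → ((l:ℝ)) * τ k < T →
      ∀ i, dist (c k j i) (c k l i) ≤ K' * τ k * ((l:ℝ) - (j:ℝ)) := by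
    intro k j l hjl
    induction l, hjl using Nat.le_induction with
    | base =>
        intro _ i
        simp
    | succ l hjl ih =>
        intro hlT i
        have hlT' : ((l:ℝ)) * τ k < T := by
          have h1 : ((l:ℝ)) * τ k ≤ ((l:ℝ)+1) * τ k := by
            have := hτpos k
            nlinarith
          have h2 : (((l+1:ℕ)):ℝ) * τ k = ((l:ℝ)+1) * τ k := by push_cast; ring
          rw [h2] at hlT
          linarith
        have hstep' : ((l:ℝ)+1) * τ k < T := by
          have h2 : (((l+1:ℕ)):ℝ) * τ k = ((l:ℝ)+1) * τ k := by push_cast; ring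
          rw [h2] at hlT
          exact hlT
        calc dist (c k j i) (c k (l+1) i)
            ≤ dist (c k j i) (c k l i) + dist (c k l i) (c k (l+1) i) := dist_triangle _ _ _
          _ ≤ K' * τ k * ((l:ℝ) - (j:ℝ)) + K' * τ k := add_le_add (ih hlT' i)
              (hc_step k l hstep' i)
          _ = K' * τ k * (((l+1:ℕ):ℝ) - (j:ℝ)) := by push_cast; ring
  -- almost-Lipschitz bound for the discrete approximations
  have hblip : ∀ (k : ℕ), ∀ s ∈ Set.Ico (0:ℝ) T, ∀ t ∈ Set.Ico (0:ℝ) T, ∀ i,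
      dist (c k (J k s) i) (c k (J k t) i) ≤ K' * (|s - t| + τ k) := by
    have main : ∀ (k : ℕ), ∀ s ∈ Set.Ico (0:ℝ) T, ∀ t ∈ Set.Ico (0:ℝ) T, J k s ≤ J k t → ∀ i,
        dist (c k (J k s) i) (c k (J k t) i) ≤ K' * (|s - t| + τ k) := by
      intro k s hs t ht hJle i
      obtain ⟨hs1, hs2⟩ := hJfact k s hs.1
      obtain ⟨ht1, ht2⟩ := hJfact k t ht.1
      have hJT : ((J k t : ℝ)) * τ k < T := lt_of_le_of_lt ht1 ht.2
      have hch := hchain k (J k s) (J k t) hJle hJT i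
      have hbound : τ k * ((J k t : ℝ) - (J k s : ℝ)) ≤ t - s + τ k := by
        have h1 : ((J k t : ℝ)) * τ k ≤ t := ht1
        have h2 : s - τ k < ((J k s : ℝ)) * τ k := by nlinarith [hτpos k]
        nlinarith
      have h3 : t - s ≤ |s - t| := by
        rw [abs_sub_comm]
        exact le_abs_self _
      calc dist (c k (J k s) i) (c k (J k t) i) ≤ K' * τ k * ((J k t : ℝ) - (J k s : ℝ)) := hch
        _ = K' * (τ k * ((J k t : ℝ) - (J k s : ℝ))) := by ring
        _ ≤ K' * (t - s + τ k) := by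
            apply mul_le_mul_of_nonneg_left hbound hK'.le
        _ ≤ K' * (|s - t| + τ k) := by
            apply mul_le_mul_of_nonneg_left _ hK'.le
            linarith
    intro k s hs t ht i
    rcases le_total (J k s) (J k t) with h | h
    · exact main k s hs t ht h i
    · rw [dist_comm, abs_sub_comm]
      exact main k t ht s hs h i
  -- pass to the limit along an ultrafilter
  set 𝒰 : Ultrafilter ℕ := Ultrafilter.of Filter.atTop with h𝒰def
  have h𝒰le : (𝒰 : Filter ℕ) ≤ Filter.atTop := Ultrafilter.of_le _
  have hconv : ∀ (i : Fin n) (t : ℝ), ∃ z : T2,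
      Filter.Tendsto (fun k => c k (J k t) i) (𝒰 : Filter ℕ) (nhds z) := by
    intro i t
    obtain ⟨z, -, hz⟩ := isCompact_univ.ultrafilter_le_nhds
      (𝒰.map (fun k => c k (J k t) i)) (by simp)
    exact ⟨z, hz⟩
  choose bfun hb using hconv
  set b : Fin n → ℝ → T2 := fun i t => bfun i t with hbdef
  -- smallness of the scales, eventually
  have hτsmall : ∀ ε : ℝ, 0 < ε → ∀ᶠ k in (𝒰 : Filter ℕ), K' * τ k ≤ ε := by
    intro ε hε
    apply h𝒰le
    have htend : Filter.Tendsto (fun k : ℕ => ((1:ℝ)/2)^k) Filter.atTop (nhds 0) :=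
      tendsto_pow_atTop_nhds_zero_of_lt_one (by norm_num) (by norm_num)
    have := htend.eventually_le_const (by positivity : (0:ℝ) < ε / K')
    filter_upwards [this] with k hk
    have h2 : τ k ≤ ((1:ℝ)/2)^k := by
      rw [hτdef]
      apply pow_le_pow_of_le_one (by norm_num) (by norm_num)
      omega
    have : τ k ≤ ε / K' := le_trans h2 hk
    calc K' * τ k ≤ K' * (ε / K') := mul_le_mul_of_nonneg_left this hK'.le
      _ = ε := by field_simp
  -- Lipschitz property of the limit
  have hbLip : ∀ i, ∀ s ∈ Set.Ico (0:ℝ) T, ∀ t ∈ Set.Ico (0:ℝ) T,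
      dist (b i s) (b i t) ≤ K' * |s - t| := by
    intro i s hs t ht
    apply le_of_forall_pos_le_add
    intro ε hε
    have h1 : Filter.Tendsto (fun k => dist (c k (J k s) i) (c k (J k t) i))
        (𝒰 : Filter ℕ) (nhds (dist (b i s) (b i t))) := (hb i s).dist (hb i t)
    apply le_of_tendsto h1
    filter_upwards [hτsmall ε hε] with k hk
    calc dist (c k (J k s) i) (c k (J k t) i) ≤ K' * (|s - t| + τ k) := hblip k s hs t ht i
      _ = K' * |s - t| + K' * τ k := by ring
      _ ≤ K' * |s - t| + ε := by linarith
  -- identification of the limit measure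
  have hbMeas : ∀ t ∈ Set.Ico (0:ℝ) T, μ t = ∑ i, diracSM (b i t) := by
    intro t ht
    -- matchings between the grid approximations and time `t`
    have hρex : ∀ k : ℕ, ∃ σ : Equiv.Perm (Fin n),
        ∀ i, dist (c k (J k t) i) (a t (σ i)) ≤ K' * τ k := by
      intro k
      obtain ⟨ht1, ht2⟩ := hJfact k t ht.1
      have hm1 : ((J k t : ℝ)) * τ k ∈ Set.Ico (0:ℝ) T := by
        constructor
        · positivity
        · exact lt_of_le_of_lt ht1 ht.2
      have hd : |((J k t : ℝ)) * τ k - t| ≤ τ k := by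
        rw [abs_le]
        constructor <;> nlinarith
      obtain ⟨ρ, hρ⟩ := hM k (((J k t : ℝ)) * τ k) t hm1 ht hd
      exact ⟨(prm k (J k t)).trans ρ, fun i => hρ (prm k (J k t) i)⟩
    choose ρfun hρfun using hρex
    -- the permutation stabilizes along the ultrafilter
    have hstab : ∃ σ : Equiv.Perm (Fin n), {k | ρfun k = σ} ∈ (𝒰 : Filter ℕ) := by
      by_contra hno
      push_neg at hno
      have hev : ∀ σ : Equiv.Perm (Fin n), ∀ᶠ k in (𝒰 : Filter ℕ), ρfun k ≠ σ := by
        intro σ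
        have := (Ultrafilter.compl_mem_iff_notMem (s := {k | ρfun k = σ})).mpr (hno σ)
        exact this
      have hall : ∀ᶠ k in (𝒰 : Filter ℕ), ∀ σ ∈ (Finset.univ : Finset (Equiv.Perm (Fin n))),
          ρfun k ≠ σ := (Filter.eventually_all_finset Finset.univ).mpr fun σ _ => hev σ
      obtain ⟨k, hk⟩ := hall.exists
      exact hk (ρfun k) (Finset.mem_univ _) rfl
    obtain ⟨σ, hσ⟩ := hstab
    have hbt : ∀ i, b i t = a t (σ i) := by
      intro i
      have hd0 : dist (b i t) (a t (σ i)) ≤ 0 := by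
        have := le_of_forall_pos_le_add (a := dist (b i t) (a t (σ i))) (b := 0) ?_
        · exact this
        intro ε hε
        have h1 : Filter.Tendsto (fun k => dist (c k (J k t) i) (a t (σ i)))
            (𝒰 : Filter ℕ) (nhds (dist (b i t) (a t (σ i)))) :=
          (hb i t).dist tendsto_const_nhds
        apply le_of_tendsto h1
        filter_upwards [hτsmall ε hε, hσ] with k hk hkσ
        have hkσ' : ρfun k = σ := hkσ
        rw [← hkσ']
        calc dist (c k (J k t) i) (a t (ρfun k i)) ≤ K' * τ k := hρfun k i
          _ ≤ 0 + ε := by linarith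
      exact dist_le_zero.mp hd0
    rw [hμ t ht]
    have : ∑ i, diracSM (a t i) = ∑ i, diracSM (a t (σ i)) :=
      (Equiv.sum_comp σ (fun j => diracSM (a t j))).symm
    rw [this]
    apply Finset.sum_congr rfl
    intro i _
    rw [hbt i]
  exact ⟨b, ⟨K', hK'.le, hbLip⟩, hbMeas⟩

/-- if for each `t ∈ [0,T)` the signed measure `μ_t` is a sum of `n`
Dirac masses `Σᵢ δ_{aᵢ(t)}`, then `t ↦ μ_t` is Lipschitz into `(M¹(T²), ‖·‖)` iff
there are Lipschitz maps `b₁, …, b_n : [0,T) → T²` with `μ_t = Σᵢ δ_{bᵢ(t)}` for all `t`. -/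
theorem dirac_sum_lipschitz_iff_lipschitz_paths
    (T : ℝ) (hT : 0 < T) (n : ℕ)
    (μ : ℝ → SignedMeasure T2) (a : ℝ → Fin n → T2)
    (hμ : ∀ t ∈ Set.Ico (0:ℝ) T, μ t = ∑ i, diracSM (a t i)) :
    (∃ K : ℝ, 0 ≤ K ∧ ∀ s ∈ Set.Ico (0:ℝ) T, ∀ t ∈ Set.Ico (0:ℝ) T,
        M1norm (μ s - μ t) ≤ K * |s - t|)
      ↔ ∃ b : Fin n → ℝ → T2,
          (∃ K : ℝ, 0 ≤ K ∧ ∀ i, ∀ s ∈ Set.Ico (0:ℝ) T, ∀ t ∈ Set.Ico (0:ℝ) T,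
            dist (b i s) (b i t) ≤ K * |s - t|) ∧
          ∀ t ∈ Set.Ico (0:ℝ) T, μ t = ∑ i, diracSM (b i t) := by
  constructor
  · rintro ⟨K, hK, hlip⟩
    exact forward_selection T hT n μ a hμ K hK hlip
  · rintro ⟨b, ⟨K, hK, hbLip⟩, hbMeas⟩
    refine ⟨n * K, by positivity, ?_⟩
    intro s hs t ht
    rw [hbMeas s hs, hbMeas t ht]
    apply M1norm_le _ (by positivity)
    intro φ ψ h1 h2
    obtain ⟨-, hφlip⟩ := adm_bound h1 h2
    rw [spair_dirac_sums _ _ h1.phi_continuous, ← Finset.sum_sub_distrib]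
    calc ∑ i, (φ (b i s) - φ (b i t)) ≤ ∑ i : Fin n, K * |s - t| := by
          apply Finset.sum_le_sum
          intro i _
          calc φ (b i s) - φ (b i t) ≤ |φ (b i s) - φ (b i t)| := le_abs_self _
            _ ≤ dist (b i s) (b i t) := hφlip _ _
            _ ≤ K * |s - t| := hbLip i s hs t ht
      _ = n * K * |s - t| := by
          rw [Finset.sum_const, Finset.card_univ, Fintype.card_fin, nsmul_eq_mul]
          ring
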